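/- Let α and β be types and let A : α → β → ℂ be a matrix of coefficients such that for every a : α the function A a has finite support and ∑' b, ‖A a b‖ = 1. Then for every element e of the ℓ¹ space lp (fun _ : α => ℂ) 1 the following hold: (i) for every b : β the function a ↦ e a * A a b is summable; (ii) the function b ↦ ∑' a, e a * A a b is an element of lp (fun _ : β => ℂ) 1; and (iii) its ℓ¹ norm is at most the ℓ¹ norm of e. (This is the absolute-convergence and boundedness computation by which an iso, sending each closed value v of type a to a finite linear combination W_v of closed values of type b whose coefficients have absolute values summing to 1, induces a well-defined bounded linear map.) -/
import Mathlib

/-- An iso sending each closed value `a` to a finite linear combination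
with coefficients whose absolute values sum to 1 induces a well-defined bounded
linear operation on `ℓ¹`. -/
theorem stmt0 {α β : Type*} (A : α → β → ℂ)
    (hfin : ∀ a, (Function.support (A a)).Finite)
    (hnorm : ∀ a, ∑' b, ‖A a b‖ = 1)
    (e : lp (fun _ : α => ℂ) 1) :
    (∀ b : β, Summable (fun a : α => e a * A a b)) ∧
    ∃ hmem : Memℓp (fun b : β => ∑' a : α, e a * A a b) 1,
      ‖(⟨fun b : β => ∑' a : α, e a * A a b, hmem⟩ : lp (fun _ : β => ℂ) 1)‖ ≤ ‖e‖ := by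
  have hAs : ∀ a, Summable fun b => ‖A a b‖ := by
    intro a
    apply summable_of_ne_finset_zero (s := (hfin a).toFinset)
    intro b hb
    simp only [Set.Finite.mem_toFinset, Function.mem_support, not_not] at hb
    simp [hb]
  have he : Summable fun a => ‖e a‖ := by
    have := lp.memℓp e
    rw [memℓp_gen_iff (by norm_num : (0:ℝ) < (1:ENNReal).toReal)] at this
    simpa using this
  have H : Summable fun q : α × β => ‖e q.1‖ * ‖A q.1 q.2‖ := by
    rw [summable_prod_of_nonneg (fun q => mul_nonneg (norm_nonneg _) (norm_nonneg _))]
    constructor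
    · intro a
      dsimp only
      exact Summable.mul_left (‖e a‖) (hAs a)
    · dsimp only
      have h1 : ∀ a, ∑' b, ‖e a‖ * ‖A a b‖ = ‖e a‖ := by
        intro a; rw [tsum_mul_left, hnorm a, mul_one]
      simpa only [h1] using he
  have H' : Summable fun q : β × α => ‖e q.2‖ * ‖A q.2 q.1‖ := H.prod_symm
  have hH' := (summable_prod_of_nonneg
    (f := fun q : β × α => ‖e q.2‖ * ‖A q.2 q.1‖)
    (fun q => mul_nonneg (norm_nonneg _) (norm_nonneg _))).1 H'
  have hfiber : ∀ b, Summable fun a => ‖e a‖ * ‖A a b‖ := fun b => hH'.1 b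
  have hnsum : ∀ b, Summable fun a : α => ‖e a * A a b‖ := by
    intro b
    simpa only [norm_mul] using hfiber b
  have hsum : ∀ b, Summable fun a : α => e a * A a b := fun b => (hnsum b).of_norm
  refine ⟨hsum, ?_⟩
  have hbd : ∀ b, ‖∑' a, e a * A a b‖ ≤ ∑' a, ‖e a‖ * ‖A a b‖ := by
    intro b
    calc ‖∑' a, e a * A a b‖ ≤ ∑' a, ‖e a * A a b‖ := norm_tsum_le_tsum_norm (hnsum b)
    _ = ∑' a, ‖e a‖ * ‖A a b‖ := by simp only [norm_mul]
  have houter : Summable fun b => ∑' a, ‖e a‖ * ‖A a b‖ := hH'.2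
  have hmem : Memℓp (fun b : β => ∑' a : α, e a * A a b) 1 := by
    apply memℓp_gen
    simp only [ENNReal.toReal_one, Real.rpow_one]
    exact houter.of_nonneg_of_le (fun b => norm_nonneg _) hbd
  refine ⟨hmem, ?_⟩
  rw [lp.norm_eq_tsum_rpow (by norm_num : (0:ℝ) < (1:ENNReal).toReal),
    lp.norm_eq_tsum_rpow (by norm_num : (0:ℝ) < (1:ENNReal).toReal) e]
  simp only [ENNReal.toReal_one, Real.rpow_one, one_div, inv_one]
  calc ∑' b, ‖(⟨fun b : β => ∑' a : α, e a * A a b, hmem⟩ : lp (fun _ : β => ℂ) 1) b‖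
      = ∑' b, ‖∑' a : α, e a * A a b‖ := rfl
    _ ≤ ∑' b, ∑' a, ‖e a‖ * ‖A a b‖ :=
        Summable.tsum_le_tsum hbd (houter.of_nonneg_of_le (fun b => norm_nonneg _) hbd) houter
    _ = ∑' a, ∑' b, ‖e a‖ * ‖A a b‖ := Summable.tsum_comm (f := fun a b => ‖e a‖ * ‖A a b‖) H
    _ = ∑' a, ‖e a‖ := by
        congr 1; funext a; rw [tsum_mul_left, hnorm a, mul_one]
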